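/- For every D > 0 there exists Q : ℝ → ℂ which is admissible, takes real and strictly positive values (Q(x).im = 0 and Q(x).re > 0 for all x ∈ ℝ), satisfies M(Q) = D, and is a minimizer: H(Q) ≤ H(φ) for every admissible φ : ℝ → ℂ with M(φ) ≤ D. -/

import Mathlib

open MeasureTheory

/-- The mass `M(f) = ∫_ℝ |f(x)|² dx`. -/
noncomputable def M (f : ℝ → ℂ) : ℝ := ∫ x : ℝ, ‖f x‖ ^ 2

/-- The focusing Hamiltonian `H(f) = (1/2)∫_ℝ |f'(x)|² dx − (1/4)∫_ℝ |f(x)|⁴ dx`. -/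
noncomputable def H (f : ℝ → ℂ) : ℝ :=
  (1 / 2) * (∫ x : ℝ, ‖deriv f x‖ ^ 2) - (1 / 4) * (∫ x : ℝ, ‖f x‖ ^ 4)

/-- `f` is admissible if it is differentiable and `|f|²`, `|f|⁴`, `|f'|²` are integrable. -/
def Admissible (f : ℝ → ℂ) : Prop :=
  Differentiable ℝ f ∧ Integrable (fun x : ℝ => ‖f x‖ ^ 2) ∧
    Integrable (fun x : ℝ => ‖f x‖ ^ 4) ∧ Integrable (fun x : ℝ => ‖deriv f x‖ ^ 2)

open Real Set Filter Topology



lemma integral_CS {f g : ℝ → ℝ} (hf : ∀ x, 0 ≤ f x) (hg : ∀ x, 0 ≤ g x)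
    (hfm : AEStronglyMeasurable f volume) (hgm : AEStronglyMeasurable g volume)
    (hf2 : Integrable (fun x => f x ^ 2)) (hg2 : Integrable (fun x => g x ^ 2)) :
    (∫ x : ℝ, f x * g x) ^ 2 ≤ (∫ x : ℝ, f x ^ 2) * ∫ x : ℝ, g x ^ 2 := by
  have hbd : Integrable (fun x : ℝ => 1/2 * (f x ^ 2 + g x ^ 2)) := by
    have := (hf2.add hg2).const_mul (1/2 : ℝ); simpa using this
  have hfg : Integrable (fun x => f x * g x) := by
    refine Integrable.mono' hbd (hfm.mul hgm) ?_
    filter_upwards with x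
    rw [Real.norm_eq_abs, abs_of_nonneg (mul_nonneg (hf x) (hg x))]
    nlinarith [sq_nonneg (f x - g x)]
  set A := ∫ x : ℝ, f x ^ 2 with hA
  set B := ∫ x : ℝ, g x ^ 2 with hB
  set C := ∫ x : ℝ, f x * g x with hC
  have hAnn : 0 ≤ A := integral_nonneg fun x => sq_nonneg _
  have hBnn : 0 ≤ B := integral_nonneg fun x => sq_nonneg _
  have hCnn : 0 ≤ C := integral_nonneg fun x => mul_nonneg (hf x) (hg x)
  have key : ∀ t : ℝ, 0 ≤ t ^ 2 * A - 2 * t * C + B := by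
    intro t
    have h1 : Integrable (fun x => t ^ 2 * f x ^ 2 - 2 * t * (f x * g x)) :=
      (hf2.const_mul _).sub (hfg.const_mul _)
    have hnn : (0:ℝ) ≤ ∫ x : ℝ, (t * f x - g x) ^ 2 := integral_nonneg fun x => sq_nonneg _
    have e : (fun x : ℝ => (t * f x - g x) ^ 2)
        = fun x => (t ^ 2 * f x ^ 2 - 2 * t * (f x * g x)) + g x ^ 2 := by
      funext x; ring
    rw [e, integral_add h1 hg2, integral_sub (hf2.const_mul _) (hfg.const_mul _),
      integral_const_mul, integral_const_mul] at hnn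
    linarith
  rcases eq_or_lt_of_le hAnn with hA0 | hApos
  · have hC0 : C = 0 := by
      by_contra hne
      have hCpos : 0 < C := lt_of_le_of_ne hCnn (Ne.symm hne)
      have hk := key ((B + 1) / (2 * C))
      have h2 : 2 * ((B+1)/(2*C)) * C = B + 1 := by field_simp
      rw [← hA0, h2] at hk
      simp at hk; linarith
    rw [hC0, ← hA0]; simp
  · have hk := key (C / A)
    have e2 : (C/A) ^ 2 * A - 2 * (C / A) * C + B = B - C^2/A := by field_simp; ring
    rw [e2] at hk
    have h3 : C^2/A ≤ B := by linarith
    have := (div_le_iff₀ hApos).mp h3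
    nlinarith

noncomputable def th (x : ℝ) : ℝ := Real.sinh x / Real.cosh x

lemma hasDerivAt_th (x : ℝ) : HasDerivAt th (1 / Real.cosh x ^ 2) x := by
  have h := (Real.hasDerivAt_sinh x).div (Real.hasDerivAt_cosh x) (Real.cosh_pos x).ne'
  have e : (Real.cosh x * Real.cosh x - Real.sinh x * Real.sinh x) / (Real.cosh x) ^ 2
      = 1 / Real.cosh x ^ 2 := by
    rw [show Real.cosh x * Real.cosh x - Real.sinh x * Real.sinh x = 1 by
      nlinarith [Real.cosh_sq_sub_sinh_sq x]]
  exact e ▸ h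

lemma th_eq (x : ℝ) : th x = 1 - 2 / (Real.exp (2 * x) + 1) := by
  have ht : (0:ℝ) < Real.exp x := Real.exp_pos x
  have h2 : Real.exp (2 * x) = Real.exp x ^ 2 := by rw [two_mul, Real.exp_add]; ring
  have hn : Real.exp (-x) = (Real.exp x)⁻¹ := Real.exp_neg x
  have hc : (0:ℝ) < Real.cosh x := Real.cosh_pos x
  rw [th, Real.sinh_eq, Real.cosh_eq, h2, hn]
  have hd : (0:ℝ) < Real.exp x + (Real.exp x)⁻¹ := by positivity
  field_simp
  ring

lemma tendsto_th_atTop : Tendsto th atTop (𝓝 1) := by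
  have h1 : Tendsto (fun x : ℝ => Real.exp (2 * x) + 1) atTop atTop :=
    (Real.tendsto_exp_atTop.comp (tendsto_id.const_mul_atTop two_pos)).atTop_add tendsto_const_nhds
  have h2 : Tendsto (fun x : ℝ => 1 - 2 / (Real.exp (2 * x) + 1)) atTop (𝓝 (1 - 0)) :=
    tendsto_const_nhds.sub (Tendsto.div_atTop tendsto_const_nhds h1)
  simpa [← th_eq] using h2.congr (fun x => (th_eq x).symm)

lemma tendsto_th_atBot : Tendsto th atBot (𝓝 (-1)) := by
  have h0 : Tendsto (fun x : ℝ => Real.exp (2 * x) + 1) atBot (𝓝 (0 + 1)) := by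
    refine Tendsto.add ?_ tendsto_const_nhds
    exact Real.tendsto_exp_atBot.comp (tendsto_id.const_mul_atBot two_pos)
  have h2 : Tendsto (fun x : ℝ => 1 - 2 / (Real.exp (2 * x) + 1)) atBot (𝓝 (1 - 2 / (0 + 1))) :=
    tendsto_const_nhds.sub (tendsto_const_nhds.div h0 (by norm_num))
  have : (1 : ℝ) - 2 / (0 + 1) = -1 := by norm_num
  rw [this] at h2
  exact h2.congr fun x => (th_eq x).symm

lemma even_integral {f : ℝ → ℝ} (he : ∀ x, f (-x) = f x) (hI : IntegrableOn f (Ioi 0)) :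
    Integrable f ∧ ∫ x : ℝ, f x = 2 * ∫ x in Ioi (0:ℝ), f x := by
  have hIic : IntegrableOn f (Iic 0) := by
    have h1 : IntegrableOn (f ∘ (fun x : ℝ => -x)) ((fun x : ℝ => -x) ⁻¹' (Ioi 0)) := by
      refine (MeasurePreserving.integrableOn_comp_preimage (Measure.measurePreserving_neg _)
        (Homeomorph.neg ℝ).measurableEmbedding).2 hI
    have h2 : (f ∘ fun x : ℝ => -x) = f := funext fun x => he x
    rw [h2] at h1
    have h3 : ((fun x : ℝ => -x) ⁻¹' (Ioi 0)) = Iio 0 := by ext y; simp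
    rw [h3] at h1
    rwa [integrableOn_Iic_iff_integrableOn_Iio]
  have hint : Integrable f := by
    rw [← integrableOn_univ, ← Set.Iic_union_Ioi (a := (0:ℝ))]
    exact hIic.union hI
  refine ⟨hint, ?_⟩
  have hv : ∫ x in Iic (0:ℝ), f x = ∫ x in Ioi (0:ℝ), f x := by
    have := integral_comp_neg_Iic (0:ℝ) f
    rw [neg_zero] at this
    rw [← this]
    exact setIntegral_congr_fun measurableSet_Iic fun x _ => (he x).symm
  rw [← intervalIntegral.integral_Iic_add_Ioi hIic hI, hv]
  ring

lemma sech2_int : Integrable (fun x : ℝ => 1 / Real.cosh x ^ 2) ∧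
    ∫ x : ℝ, 1 / Real.cosh x ^ 2 = 2 := by
  have hIoi := integral_Ioi_of_hasDerivAt_of_nonneg' (a := 0)
    (fun x _ => hasDerivAt_th x) (g'pos := fun x _ => by positivity) tendsto_th_atTop
  have hInt := integrableOn_Ioi_deriv_of_nonneg' (a := 0)
    (fun x _ => hasDerivAt_th x) (g'pos := fun x _ => by positivity) tendsto_th_atTop
  have he : ∀ x : ℝ, 1 / Real.cosh (-x) ^ 2 = 1 / Real.cosh x ^ 2 := fun x => by
    rw [Real.cosh_neg]
  obtain ⟨h1, h2⟩ := even_integral he hInt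
  refine ⟨h1, ?_⟩
  rw [h2, hIoi]
  simp [th, Real.sinh_zero]

lemma sech4_deriv (x : ℝ) : HasDerivAt (fun x => th x - th x ^ 3 / 3) (1 / Real.cosh x ^ 4) x := by
  have h := (hasDerivAt_th x).sub (((hasDerivAt_th x).pow 3).div_const 3)
  refine h.congr_deriv ?_
  symm
  have hc : (0:ℝ) < Real.cosh x := Real.cosh_pos x
  have hid : Real.cosh x ^ 2 - Real.sinh x ^ 2 = 1 := Real.cosh_sq_sub_sinh_sq x
  simp only [th]
  norm_num
  field_simp
  linear_combination -hid

lemma sech4_int : Integrable (fun x : ℝ => 1 / Real.cosh x ^ 4) ∧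
    ∫ x : ℝ, 1 / Real.cosh x ^ 4 = 4 / 3 := by
  have hlim : Tendsto (fun x => th x - th x ^ 3 / 3) atTop (𝓝 (1 - 1 ^ 3 / 3)) :=
    tendsto_th_atTop.sub ((tendsto_th_atTop.pow 3).div_const 3)
  have hIoi := integral_Ioi_of_hasDerivAt_of_nonneg' (a := 0)
    (fun x _ => sech4_deriv x) (g'pos := fun x _ => by positivity) hlim
  have hInt := integrableOn_Ioi_deriv_of_nonneg' (a := 0)
    (fun x _ => sech4_deriv x) (g'pos := fun x _ => by positivity) hlim
  have he : ∀ x : ℝ, 1 / Real.cosh (-x) ^ 4 = 1 / Real.cosh x ^ 4 := fun x => by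
    rw [Real.cosh_neg]
  obtain ⟨h1, h2⟩ := even_integral he hInt
  refine ⟨h1, ?_⟩
  rw [h2, hIoi]
  simp [th, Real.sinh_zero]
  norm_num

lemma sech2tanh2_deriv (x : ℝ) :
    HasDerivAt (fun x => th x ^ 3 / 3) (Real.sinh x ^ 2 / Real.cosh x ^ 4) x := by
  have h := ((hasDerivAt_th x).pow 3).div_const 3
  refine h.congr_deriv ?_
  symm
  have hc : (0:ℝ) < Real.cosh x := Real.cosh_pos x
  simp only [th]
  norm_num
  field_simp

lemma sech2tanh2_int : Integrable (fun x : ℝ => Real.sinh x ^ 2 / Real.cosh x ^ 4) ∧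
    ∫ x : ℝ, Real.sinh x ^ 2 / Real.cosh x ^ 4 = 2 / 3 := by
  have hlim : Tendsto (fun x => th x ^ 3 / 3) atTop (𝓝 (1 ^ 3 / 3)) :=
    (tendsto_th_atTop.pow 3).div_const 3
  have hIoi := integral_Ioi_of_hasDerivAt_of_nonneg' (a := 0)
    (fun x _ => sech2tanh2_deriv x) (g'pos := fun x _ => by positivity) hlim
  have hInt := integrableOn_Ioi_deriv_of_nonneg' (a := 0)
    (fun x _ => sech2tanh2_deriv x) (g'pos := fun x _ => by positivity) hlim
  have he : ∀ x : ℝ, Real.sinh (-x) ^ 2 / Real.cosh (-x) ^ 4 = Real.sinh x ^ 2 / Real.cosh x ^ 4 :=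
    fun x => by rw [Real.cosh_neg, Real.sinh_neg]; ring
  obtain ⟨h1, h2⟩ := even_integral he hInt
  refine ⟨h1, ?_⟩
  rw [h2, hIoi]
  simp [th, Real.sinh_zero]
  norm_num

noncomputable def QR (c : ℝ) (x : ℝ) : ℝ := Real.sqrt 2 * c / Real.cosh (c * x)
noncomputable def QRd (c : ℝ) (x : ℝ) : ℝ :=
  -(Real.sqrt 2 * c ^ 2 * Real.sinh (c * x) / Real.cosh (c * x) ^ 2)

lemma QR_hasDeriv (c x : ℝ) : HasDerivAt (QR c) (QRd c x) x := by
  have h1 : HasDerivAt (fun x : ℝ => c * x) c x := by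
    simpa using (hasDerivAt_id x).const_mul c
  have h2 := (Real.hasDerivAt_cosh (c * x)).comp x h1
  have h3 := (h2.inv (Real.cosh_pos (c * x)).ne').const_mul (Real.sqrt 2 * c)
  have e : ∀ y : ℝ, QR c y = Real.sqrt 2 * c * (Real.cosh (c * y))⁻¹ := fun y => by
    rw [QR, div_eq_mul_inv]
  have := h3.congr_of_eventuallyEq (Filter.Eventually.of_forall fun y => (e y).symm)
  convert this using 1
  · rfl
  · rfl
  · exact funext e
  rw [QRd]
  simp only [Function.comp]
  field_simp

lemma Q_hasDeriv (c x : ℝ) : HasDerivAt (fun y : ℝ => (QR c y : ℂ)) ((QRd c x : ℂ)) x :=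
  (QR_hasDeriv c x).ofReal_comp

lemma Q_deriv (c : ℝ) : deriv (fun y : ℝ => (QR c y : ℂ)) = fun x => ((QRd c x : ℝ) : ℂ) :=
  funext fun x => (Q_hasDeriv c x).deriv

lemma normQ_sq (c x : ℝ) : ‖((QR c x : ℝ) : ℂ)‖ ^ 2 = 2 * c ^ 2 * (1 / Real.cosh (c * x) ^ 2) := by
  rw [Complex.norm_real, Real.norm_eq_abs, sq_abs, QR, div_pow, mul_pow,
    Real.sq_sqrt (by norm_num : (2:ℝ) ≥ 0)]
  ring

lemma normQ_4 (c x : ℝ) : ‖((QR c x : ℝ) : ℂ)‖ ^ 4 = 4 * c ^ 4 * (1 / Real.cosh (c * x) ^ 4) := by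
  have : ‖((QR c x : ℝ) : ℂ)‖ ^ 4 = (‖((QR c x : ℝ) : ℂ)‖ ^ 2) ^ 2 := by ring
  rw [this, normQ_sq]
  have h4 : (Real.cosh (c*x) ^ 2) ^ 2 = Real.cosh (c*x) ^ 4 := by ring
  field_simp
  ring

lemma normQd_sq (c x : ℝ) :
    ‖((QRd c x : ℝ) : ℂ)‖ ^ 2 = 2 * c ^ 4 * (Real.sinh (c * x) ^ 2 / Real.cosh (c * x) ^ 4) := by
  rw [Complex.norm_real, Real.norm_eq_abs, sq_abs, QRd]
  rw [neg_sq, div_pow, mul_pow, mul_pow, Real.sq_sqrt (by norm_num : (2:ℝ) ≥ 0)]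
  have : (Real.cosh (c*x) ^ 2) ^ 2 = Real.cosh (c*x) ^ 4 := by ring
  rw [this]
  have h2 : (c ^ 2) ^ 2 = c ^ 4 := by ring
  rw [h2]
  ring

section Qints
variable {c : ℝ} (hc : 0 < c)

include hc

lemma Q_mass_int : Integrable (fun x : ℝ => ‖((QR c x : ℝ) : ℂ)‖ ^ 2) ∧
    ∫ x : ℝ, ‖((QR c x : ℝ) : ℂ)‖ ^ 2 = 4 * c := by
  have he : (fun x : ℝ => ‖((QR c x : ℝ) : ℂ)‖ ^ 2)
      = fun x => 2 * c ^ 2 * (1 / Real.cosh (c * x) ^ 2) := funext fun x => normQ_sq c x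
  have hcomp : Integrable (fun x : ℝ => 1 / Real.cosh (c * x) ^ 2) :=
    (integrable_comp_mul_left_iff (fun y => 1 / Real.cosh y ^ 2) hc.ne').2 sech2_int.1
  constructor
  · rw [he]; exact hcomp.const_mul _
  · rw [he]
    rw [MeasureTheory.integral_const_mul]
    rw [Measure.integral_comp_mul_left (fun y => 1 / Real.cosh y ^ 2) c, sech2_int.2,
      abs_of_pos (inv_pos.2 hc)]
    rw [smul_eq_mul]
    field_simp
    ring

lemma Q_four_int : Integrable (fun x : ℝ => ‖((QR c x : ℝ) : ℂ)‖ ^ 4) ∧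
    ∫ x : ℝ, ‖((QR c x : ℝ) : ℂ)‖ ^ 4 = 16 * c ^ 3 / 3 := by
  have he : (fun x : ℝ => ‖((QR c x : ℝ) : ℂ)‖ ^ 4)
      = fun x => 4 * c ^ 4 * (1 / Real.cosh (c * x) ^ 4) := funext fun x => normQ_4 c x
  have hcomp : Integrable (fun x : ℝ => 1 / Real.cosh (c * x) ^ 4) :=
    (integrable_comp_mul_left_iff (fun y => 1 / Real.cosh y ^ 4) hc.ne').2 sech4_int.1
  constructor
  · rw [he]; exact hcomp.const_mul _
  · rw [he, MeasureTheory.integral_const_mul,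
      Measure.integral_comp_mul_left (fun y => 1 / Real.cosh y ^ 4) c, sech4_int.2,
      abs_of_pos (inv_pos.2 hc), smul_eq_mul]
    field_simp
    ring

lemma Q_deriv_int : Integrable (fun x : ℝ => ‖deriv (fun y : ℝ => (QR c y : ℂ)) x‖ ^ 2) ∧
    ∫ x : ℝ, ‖deriv (fun y : ℝ => (QR c y : ℂ)) x‖ ^ 2 = 4 * c ^ 3 / 3 := by
  have he : (fun x : ℝ => ‖deriv (fun y : ℝ => (QR c y : ℂ)) x‖ ^ 2)
      = fun x => 2 * c ^ 4 * (Real.sinh (c * x) ^ 2 / Real.cosh (c * x) ^ 4) := by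
    funext x; rw [Q_deriv c]; exact normQd_sq c x
  have hcomp : Integrable (fun x : ℝ => Real.sinh (c * x) ^ 2 / Real.cosh (c * x) ^ 4) :=
    (integrable_comp_mul_left_iff (fun y => Real.sinh y ^ 2 / Real.cosh y ^ 4) hc.ne').2
      sech2tanh2_int.1
  constructor
  · rw [he]; exact hcomp.const_mul _
  · rw [he, MeasureTheory.integral_const_mul,
      Measure.integral_comp_mul_left (fun y => Real.sinh y ^ 2 / Real.cosh y ^ 4) c,
      sech2tanh2_int.2, abs_of_pos (inv_pos.2 hc), smul_eq_mul]
    field_simp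
    ring

end Qints

lemma norm_sq_complex (z : ℂ) : ‖z‖ ^ 2 = z.re ^ 2 + z.im ^ 2 := by
  rw [Complex.sq_norm, Complex.normSq_apply]; ring

lemma GN {φ : ℝ → ℂ} (hdiff : Differentiable ℝ φ)
    (h2 : Integrable (fun x : ℝ => ‖φ x‖ ^ 2)) (h4 : Integrable (fun x : ℝ => ‖φ x‖ ^ 4))
    (hd : Integrable (fun x : ℝ => ‖deriv φ x‖ ^ 2)) :
    (∫ x : ℝ, ‖φ x‖ ^ 4) ^ 2
      ≤ (∫ x : ℝ, ‖φ x‖ ^ 2) ^ 3 / 3 * ∫ x : ℝ, ‖deriv φ x‖ ^ 2 := by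
  classical
  set v : ℝ → ℝ := fun x => ‖φ x‖ ^ 2 with hv
  set vd : ℝ → ℝ :=
    fun x => 2 * ((φ x).re * (deriv φ x).re + (φ x).im * (deriv φ x).im) with hvd
  have hφc : Continuous φ := hdiff.continuous
  have hvcont : Continuous v := (hφc.norm.pow 2)
  have hvnn : ∀ x, 0 ≤ v x := fun x => by positivity
  -- derivative of v
  have hv_deriv : ∀ x, HasDerivAt v (vd x) x := by
    intro x
    have hφ' := (hdiff x).hasDerivAt
    have hre : HasDerivAt (fun y => (φ y).re) ((deriv φ x).re) x :=
      Complex.reCLM.hasFDerivAt.comp_hasDerivAt x hφ'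
    have him : HasDerivAt (fun y => (φ y).im) ((deriv φ x).im) x :=
      Complex.imCLM.hasFDerivAt.comp_hasDerivAt x hφ'
    have h1 := (hre.pow 2).add (him.pow 2)
    have he : ((fun y => (φ y).re) ^ 2 + (fun y => (φ y).im) ^ 2) = v :=
      funext fun y => (norm_sq_complex (φ y)).symm
    rw [he] at h1
    refine h1.congr_deriv ?_
    symm
    push_cast
    ring
  have hdm : Measurable (deriv φ) := measurable_deriv φ
  have hvdm : AEStronglyMeasurable vd volume := by
    refine Measurable.aestronglyMeasurable ?_
    exact (((Complex.measurable_re.comp hφc.measurable).mul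
      (Complex.measurable_re.comp hdm)).add
      ((Complex.measurable_im.comp hφc.measurable).mul
      (Complex.measurable_im.comp hdm))).const_mul 2
  have hvd_bound : ∀ x, |vd x| ≤ 2 * ‖φ x‖ * ‖deriv φ x‖ := by
    intro x
    have hsq : (vd x) ^ 2 ≤ (2 * ‖φ x‖ * ‖deriv φ x‖) ^ 2 := by
      have e1 := norm_sq_complex (φ x)
      have e2 := norm_sq_complex (deriv φ x)
      have hcs := sq_nonneg ((φ x).re * (deriv φ x).im - (φ x).im * (deriv φ x).re)
      have hnn1 : 0 ≤ ‖φ x‖ := norm_nonneg _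
      have hnn2 : 0 ≤ ‖deriv φ x‖ := norm_nonneg _
      simp only [hvd]
      nlinarith [sq_nonneg (‖φ x‖ * ‖deriv φ x‖)]
    have hrhs : 0 ≤ 2 * ‖φ x‖ * ‖deriv φ x‖ := by positivity
    calc |vd x| = Real.sqrt ((vd x) ^ 2) := (Real.sqrt_sq_eq_abs _).symm
      _ ≤ Real.sqrt ((2 * ‖φ x‖ * ‖deriv φ x‖) ^ 2) := Real.sqrt_le_sqrt hsq
      _ = 2 * ‖φ x‖ * ‖deriv φ x‖ := Real.sqrt_sq hrhs
  have hvd_int : Integrable vd := by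
    have hsum : Integrable (fun x : ℝ => v x + ‖deriv φ x‖ ^ 2) := by
      have := h2.add hd; exact this
    refine Integrable.mono' hsum hvdm ?_
    filter_upwards with x
    rw [Real.norm_eq_abs]
    refine (hvd_bound x).trans ?_
    simp only [hv]
    nlinarith [sq_nonneg (‖φ x‖ - ‖deriv φ x‖)]
  have hv2_int : Integrable (fun x => v x ^ 2) := by
    have he : (fun x : ℝ => v x ^ 2) = fun x : ℝ => ‖φ x‖ ^ 4 := funext fun x => by
      simp only [hv]; ring
    rw [he]; exact h4
  -- v tends to zero at both ends
  have hv0top : Tendsto v atTop (𝓝 0) :=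
    tendsto_zero_of_hasDerivAt_of_integrableOn_Ioi (a := 0)
      (fun x _ => hv_deriv x) hvd_int.integrableOn h2.integrableOn
  have hv0bot : Tendsto v atBot (𝓝 0) :=
    tendsto_zero_of_hasDerivAt_of_integrableOn_Iic (a := 0)
      (fun x _ => hv_deriv x) hvd_int.integrableOn h2.integrableOn
  set N : ℝ := ∫ x : ℝ, v x with hN
  set K : ℝ := ∫ x : ℝ, ‖deriv φ x‖ ^ 2 with hK
  set P : ℝ := ∫ x : ℝ, ‖φ x‖ ^ 4 with hP
  have hNnn : 0 ≤ N := integral_nonneg hvnn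
  have hKnn : 0 ≤ K := integral_nonneg fun x => by positivity
  have hPnn : 0 ≤ P := integral_nonneg fun x => by positivity
  set T : ℝ → ℝ := fun r => ∫ x in Iic r, v x with hT
  have hT0 : ∀ r, 0 ≤ T r := fun r =>
    setIntegral_nonneg measurableSet_Iic fun x _ => hvnn x
  have hTN : ∀ r, T r ≤ N := fun r =>
    setIntegral_le_integral h2 (Filter.Eventually.of_forall hvnn)
  have hTkey : ∀ r : ℝ, T r = T 0 + ∫ t in (0:ℝ)..r, v t := by
    intro r
    have := intervalIntegral.integral_Iic_sub_Iic (h2.integrableOn) (h2.integrableOn)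
      (a := 0) (b := r)
    simp only [hT]
    linarith [this]
  have hTd : ∀ r, HasDerivAt T (v r) r := by
    intro r
    have h := intervalIntegral.integral_hasDerivAt_right
      (h2.intervalIntegrable (a := 0) (b := r))
      hvcont.stronglyMeasurable.stronglyMeasurableAtFilter
      (hvcont.continuousAt)
    have := h.const_add (T 0)
    have he : (fun u => T 0 + ∫ x in (0:ℝ)..u, v x) = T := funext fun u => (hTkey u).symm
    rwa [he] at this
  have hTcont : Continuous T := continuous_iff_continuousAt.2 fun r => (hTd r).continuousAt
  have hTtop : Tendsto T atTop (𝓝 N) := by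
    have h1 : Tendsto (fun r => ∫ t in (0:ℝ)..r, v t) atTop (𝓝 (∫ t in Ioi (0:ℝ), v t)) :=
      intervalIntegral_tendsto_integral_Ioi 0 h2.integrableOn tendsto_id
    have h2' : Tendsto (fun r => T 0 + ∫ t in (0:ℝ)..r, v t) atTop
        (𝓝 (T 0 + ∫ t in Ioi (0:ℝ), v t)) := tendsto_const_nhds.add h1
    have he : T 0 + ∫ t in Ioi (0:ℝ), v t = N :=
      intervalIntegral.integral_Iic_add_Ioi h2.integrableOn h2.integrableOn
    rw [he] at h2'
    exact h2'.congr fun r => (hTkey r).symm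
  have hTbot : Tendsto T atBot (𝓝 0) := by
    have h1 : Tendsto (fun r => ∫ t in r..(0:ℝ), v t) atBot (𝓝 (T 0)) :=
      intervalIntegral_tendsto_integral_Iic 0 h2.integrableOn tendsto_id
    have h2' : Tendsto (fun r => T 0 - ∫ t in r..(0:ℝ), v t) atBot (𝓝 (T 0 - T 0)) :=
      tendsto_const_nhds.sub h1
    rw [sub_self] at h2'
    refine h2'.congr fun r => ?_
    have hsymm : (∫ t in r..(0:ℝ), v t) = -∫ t in (0:ℝ)..r, v t :=
      intervalIntegral.integral_symm 0 r
    rw [hTkey r, hsymm]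
    ring
  -- the function G
  have hNTd : ∀ r, HasDerivAt (fun r => N - 2 * T r) (-(2 * v r)) r := fun r =>
    ((hTd r).const_mul 2).const_sub N
  have hGd : ∀ r, HasDerivAt (fun r => (N - 2 * T r) * v r)
      ((N - 2 * T r) * vd r - 2 * v r ^ 2) r := by
    intro r
    have := (hNTd r).mul (hv_deriv r)
    refine this.congr_deriv ?_
    symm
    ring
  have hNTtop : Tendsto (fun r => N - 2 * T r) atTop (𝓝 (-N)) := by
    have h1 : Tendsto (fun r => 2 * T r) atTop (𝓝 (2 * N)) := hTtop.const_mul 2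
    have h2' : Tendsto (fun r => N - 2 * T r) atTop (𝓝 (N - 2 * N)) :=
      (tendsto_const_nhds (x := N)).sub h1
    have he : N - 2 * N = -N := by ring
    rwa [he] at h2'
  have hNTbot : Tendsto (fun r => N - 2 * T r) atBot (𝓝 N) := by
    have h1 : Tendsto (fun r => 2 * T r) atBot (𝓝 (2 * 0)) := hTbot.const_mul 2
    have h2' : Tendsto (fun r => N - 2 * T r) atBot (𝓝 (N - 2 * 0)) :=
      (tendsto_const_nhds (x := N)).sub h1
    have he : N - 2 * 0 = N := by ring
    rwa [he] at h2'
  have hGtop : Tendsto (fun r => (N - 2 * T r) * v r) atTop (𝓝 0) := by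
    have := hNTtop.mul hv0top
    simpa using this
  have hGbot : Tendsto (fun r => (N - 2 * T r) * v r) atBot (𝓝 0) := by
    have := hNTbot.mul hv0bot
    simpa using this
  have hNTbd : ∀ r, |N - 2 * T r| ≤ N := fun r => by
    rw [abs_le]; constructor <;> nlinarith [hT0 r, hTN r]
  have hpart1_int : Integrable (fun r => (N - 2 * T r) * vd r) := by
    refine Integrable.mono' (hvd_int.abs.const_mul N)
      ((continuous_const.sub (continuous_const.mul hTcont)).aestronglyMeasurable.mul hvdm) ?_
    filter_upwards with r
    rw [Real.norm_eq_abs, abs_mul]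
    exact mul_le_mul_of_nonneg_right (hNTbd r) (abs_nonneg _)
  have hG'int : Integrable (fun r => (N - 2 * T r) * vd r - 2 * v r ^ 2) :=
    hpart1_int.sub (hv2_int.const_mul 2)
  have hGint0 : (∫ r : ℝ, ((N - 2 * T r) * vd r - 2 * v r ^ 2)) = 0 := by
    have hIoi : ∫ r in Ioi (0:ℝ), ((N - 2 * T r) * vd r - 2 * v r ^ 2)
        = 0 - (N - 2 * T 0) * v 0 :=
      integral_Ioi_of_hasDerivAt_of_tendsto' (fun x _ => hGd x) hG'int.integrableOn hGtop
    have hIic : ∫ r in Iic (0:ℝ), ((N - 2 * T r) * vd r - 2 * v r ^ 2)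
        = (N - 2 * T 0) * v 0 - 0 :=
      integral_Iic_of_hasDerivAt_of_tendsto' (fun x _ => hGd x) hG'int.integrableOn hGbot
    rw [← intervalIntegral.integral_Iic_add_Ioi hG'int.integrableOn hG'int.integrableOn,
      hIoi, hIic]
    ring
  have hPv : P = ∫ x : ℝ, v x ^ 2 := by
    rw [hP]
    congr 1
    funext x
    simp only [hv]; ring
  have h2P : (∫ r : ℝ, (N - 2 * T r) * vd r) = 2 * P := by
    have := integral_sub hpart1_int (hv2_int.const_mul 2)
    rw [hGint0] at this
    rw [integral_const_mul] at this
    rw [hPv]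
    linarith [this]
  -- the function Φ and ∫ (N-2T)² v = N³/3
  have hΦd : ∀ r, HasDerivAt (fun r => -(N - 2 * T r) ^ 3 / 6) ((N - 2 * T r) ^ 2 * v r) r := by
    intro r
    have := (((hNTd r).pow 3).div_const 6).neg
    convert this using 1
    · rfl
    · rfl
    · funext y; simp only [Pi.neg_apply, Pi.pow_apply]; ring
    · push_cast; ring
  have hΦ'int : Integrable (fun r => (N - 2 * T r) ^ 2 * v r) := by
    refine Integrable.mono' (h2.const_mul (N ^ 2))
      ((((continuous_const.sub (continuous_const.mul hTcont)).pow 2).aestronglyMeasurable).mul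
        hvcont.aestronglyMeasurable) ?_
    filter_upwards with r
    rw [Real.norm_eq_abs, abs_of_nonneg (mul_nonneg (sq_nonneg _) (hvnn r))]
    have h1 : (N - 2 * T r) ^ 2 ≤ N ^ 2 := by
      have := hNTbd r
      nlinarith [abs_nonneg (N - 2 * T r), sq_abs (N - 2 * T r)]
    exact mul_le_mul_of_nonneg_right h1 (hvnn r)
  have hΦtop : Tendsto (fun r => -(N - 2 * T r) ^ 3 / 6) atTop (𝓝 (N ^ 3 / 6)) := by
    have := ((hNTtop.pow 3).div_const 6).neg
    have he : -(-N) ^ 3 / 6 = N ^ 3 / 6 := by ring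
    have h2' : Tendsto (fun r => -((N - 2 * T r) ^ 3 / 6)) atTop (𝓝 (-((-N) ^ 3 / 6))) := this
    have h3 : -((-N) ^ 3 / 6) = N ^ 3 / 6 := by ring
    rw [h3] at h2'
    exact h2'.congr fun r => by ring
  have hΦbot : Tendsto (fun r => -(N - 2 * T r) ^ 3 / 6) atBot (𝓝 (-(N ^ 3) / 6)) := by
    have h2' : Tendsto (fun r => -((N - 2 * T r) ^ 3 / 6)) atBot (𝓝 (-(N ^ 3 / 6))) :=
      ((hNTbot.pow 3).div_const 6).neg
    have h3 : -(N ^ 3 / 6) = -(N ^ 3) / 6 := by ring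
    rw [h3] at h2'
    exact h2'.congr fun r => by ring
  have hΦval : (∫ r : ℝ, (N - 2 * T r) ^ 2 * v r) = N ^ 3 / 3 := by
    have hIoi : ∫ r in Ioi (0:ℝ), (N - 2 * T r) ^ 2 * v r
        = N ^ 3 / 6 - -(N - 2 * T 0) ^ 3 / 6 :=
      integral_Ioi_of_hasDerivAt_of_tendsto' (fun x _ => hΦd x) hΦ'int.integrableOn hΦtop
    have hIic : ∫ r in Iic (0:ℝ), (N - 2 * T r) ^ 2 * v r
        = -(N - 2 * T 0) ^ 3 / 6 - -(N ^ 3) / 6 :=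
      integral_Iic_of_hasDerivAt_of_tendsto' (fun x _ => hΦd x) hΦ'int.integrableOn hΦbot
    rw [← intervalIntegral.integral_Iic_add_Ioi hΦ'int.integrableOn hΦ'int.integrableOn,
      hIoi, hIic]
    ring
  -- Cauchy-Schwarz
  set f : ℝ → ℝ := fun x => |N - 2 * T x| * ‖φ x‖ with hf
  set g : ℝ → ℝ := fun x => ‖deriv φ x‖ with hg
  have hfnn : ∀ x, 0 ≤ f x := fun x => mul_nonneg (abs_nonneg _) (norm_nonneg _)
  have hgnn : ∀ x, 0 ≤ g x := fun x => norm_nonneg _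
  have hfm : AEStronglyMeasurable f volume :=
    (((continuous_const.sub (continuous_const.mul hTcont)).abs).mul hφc.norm).aestronglyMeasurable
  have hgm : AEStronglyMeasurable g volume := (hdm.norm).aestronglyMeasurable
  have hf2eq : (fun x => f x ^ 2) = fun x => (N - 2 * T x) ^ 2 * v x := by
    funext x
    simp only [hf, hv]
    rw [mul_pow, sq_abs]
  have hf2 : Integrable (fun x => f x ^ 2) := by rw [hf2eq]; exact hΦ'int
  have hg2 : Integrable (fun x => g x ^ 2) := hd
  have hCS := integral_CS hfnn hgnn hfm hgm hf2 hg2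
  rw [hf2eq, hΦval] at hCS
  have hfg_int : Integrable (fun x => f x * g x) := by
    have hsumfg : Integrable (fun x : ℝ => 1/2 * (f x ^ 2 + g x ^ 2)) := by
      have := (hf2.add hg2).const_mul (1/2 : ℝ); simpa using this
    refine Integrable.mono' hsumfg (hfm.mul hgm) ?_
    filter_upwards with x
    rw [Real.norm_eq_abs, abs_of_nonneg (mul_nonneg (hfnn x) (hgnn x))]
    nlinarith [sq_nonneg (f x - g x)]
  have hmono : (∫ r : ℝ, (N - 2 * T r) * vd r) ≤ ∫ x : ℝ, 2 * (f x * g x) := by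
    refine integral_mono hpart1_int (hfg_int.const_mul 2) ?_
    intro x
    have h1 : (N - 2 * T x) * vd x ≤ |N - 2 * T x| * |vd x| := by
      calc (N - 2 * T x) * vd x ≤ |(N - 2 * T x) * vd x| := le_abs_self _
        _ = |N - 2 * T x| * |vd x| := abs_mul _ _
    refine h1.trans ?_
    have h2' : |vd x| ≤ 2 * ‖φ x‖ * ‖deriv φ x‖ := hvd_bound x
    have h3 : |N - 2 * T x| * |vd x| ≤ |N - 2 * T x| * (2 * ‖φ x‖ * ‖deriv φ x‖) :=
      mul_le_mul_of_nonneg_left h2' (abs_nonneg _)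
    refine h3.trans ?_
    simp only [hf, hg]
    ring_nf
    exact le_refl _
  rw [h2P, integral_const_mul] at hmono
  have hPle : P ≤ ∫ x : ℝ, f x * g x := by linarith
  have hCnn : 0 ≤ ∫ x : ℝ, f x * g x :=
    integral_nonneg fun x => mul_nonneg (hfnn x) (hgnn x)
  calc P ^ 2 ≤ (∫ x : ℝ, f x * g x) ^ 2 := by nlinarith
    _ ≤ N ^ 3 / 3 * K := hCS

/-- Existence of a positive minimizer with full mass `D` for the constrained
variational problem `I(D) = inf {H(φ) : M(φ) ≤ D}`. -/
theorem exists_positive_minimizer (D : ℝ) (hD : 0 < D) :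
    ∃ Q : ℝ → ℂ, Admissible Q ∧ (∀ x : ℝ, (Q x).im = 0 ∧ 0 < (Q x).re) ∧ M Q = D ∧
      ∀ φ : ℝ → ℂ, Admissible φ → M φ ≤ D → H Q ≤ H φ := by
  set c : ℝ := D / 4 with hc
  have hcpos : 0 < c := by positivity
  refine ⟨fun x => ((QR c x : ℝ) : ℂ), ⟨fun x => (Q_hasDeriv c x).differentiableAt,
    (Q_mass_int hcpos).1, (Q_four_int hcpos).1, (Q_deriv_int hcpos).1⟩, ?_, ?_, ?_⟩
  · intro x
    refine ⟨Complex.ofReal_im _, ?_⟩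
    rw [Complex.ofReal_re]
    exact div_pos (mul_pos (Real.sqrt_pos.2 (by norm_num)) hcpos) (Real.cosh_pos _)
  · show (∫ x : ℝ, ‖((QR c x : ℝ) : ℂ)‖ ^ 2) = D
    rw [(Q_mass_int hcpos).2, hc]
    ring
  · intro φ hφ hMφ
    obtain ⟨hφd, hφ2, hφ4, hφd2⟩ := hφ
    have hGN := GN hφd hφ2 hφ4 hφd2
    have hHQ : H (fun x => ((QR c x : ℝ) : ℂ)) = -(D ^ 3 / 96) := by
      simp only [H]
      rw [(Q_deriv_int hcpos).2, (Q_four_int hcpos).2, hc]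
      ring
    rw [hHQ]
    simp only [H]
    simp only [M] at hMφ
    set N : ℝ := ∫ x : ℝ, ‖φ x‖ ^ 2 with hN
    set K : ℝ := ∫ x : ℝ, ‖deriv φ x‖ ^ 2 with hK
    set P : ℝ := ∫ x : ℝ, ‖φ x‖ ^ 4 with hP
    have hNnn : 0 ≤ N := integral_nonneg fun x => by positivity
    have hKnn : 0 ≤ K := integral_nonneg fun x => by positivity
    have hPnn : 0 ≤ P := integral_nonneg fun x => by positivity
    have hN3 : N ^ 3 ≤ D ^ 3 := pow_le_pow_left₀ hNnn hMφ 3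
    have hP2 : P ^ 2 ≤ D ^ 3 / 3 * K := by
      refine hGN.trans ?_
      have : N ^ 3 / 3 ≤ D ^ 3 / 3 := by linarith
      exact mul_le_mul_of_nonneg_right this hKnn
    have ha : 0 ≤ 48 * K + D ^ 3 := by positivity
    have hsq : (24 * P) ^ 2 ≤ (48 * K + D ^ 3) ^ 2 := by
      nlinarith [sq_nonneg (48 * K - D ^ 3)]
    have hkey : 24 * P ≤ 48 * K + D ^ 3 := by
      have h1 := Real.sqrt_le_sqrt hsq
      rwa [Real.sqrt_sq (by positivity), Real.sqrt_sq ha] at h1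
    linarith
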